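/- For a partition λ = (λ_1, ..., λ_ℓ), the generating function identity ∑_{k=0}^{ℓ} R_k(λ) [x]_{ℓ−k} = ∏_{i=1}^{ℓ} [x + λ_{ℓ−i+1} − i + 1] holds, where R_k(λ) are the Garsia–Remmel q-rook numbers, [x] = (1−q^x)/(1−q), and [x]_j = [x][x−1]···[x−j+1]. -/

import Mathlib

open Finset

noncomputable section
open scoped Classical

variable {K : Type*} [Field K]

/-- The `q`-integer `[x] = (1 - q^x)/(1 - q)` for an integer `x`. -/
def qInt (q : K) (x : ℤ) : K := (1 - q ^ x) / (1 - q)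

/-- The falling `q`-factorial `[x]_j = [x][x-1]⋯[x-j+1]`. -/
def qFall (q : K) (x : ℤ) (j : ℕ) : K := ∏ t ∈ Finset.range j, qInt q (x - t)

/-- The `q`-factorial `[n]! = [n]_n`. -/
def qFact (q : K) (n : ℕ) : K := qFall q (n : ℤ) n

/-- The Gaussian (`q`-)binomial coefficient `[a]!/([b]! [a-b]!)`. -/
def qBinom (q : K) (a b : ℕ) : K := qFact q a / (qFact q b * qFact q (a - b))

/-- The cells of the Ferrers board of `lam` (1-indexed rows `1,…,ℓ`):
cell `(i,j)` with `1 ≤ i ≤ ℓ` and `1 ≤ j ≤ lam i`. -/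
def board (lam : ℕ → ℕ) (ℓ : ℕ) : Finset (ℕ × ℕ) :=
  ((Finset.Icc 1 ℓ) ×ˢ (Finset.Icc 1 ((Finset.Icc 1 ℓ).sup lam))).filter
    (fun c => c.2 ≤ lam c.1)

/-- Placements of `k` non-attacking rooks on the Ferrers board of `lam`. -/
def placements (lam : ℕ → ℕ) (ℓ k : ℕ) : Finset (Finset (ℕ × ℕ)) :=
  (board lam ℓ).powerset.filter
    (fun p => p.card = k ∧ ∀ a ∈ p, ∀ b ∈ p, a ≠ b → a.1 ≠ b.1 ∧ a.2 ≠ b.2)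

/-- The Garsia–Remmel inversion statistic of a rook placement `p`: the number of
cells of the board that are not occupied by a rook and not directly west
(same row, with a rook strictly to the east) or north (same column, with a rook
strictly to the south) of a rook. -/
def rInv (lam : ℕ → ℕ) (ℓ : ℕ) (p : Finset (ℕ × ℕ)) : ℕ :=
  ((board lam ℓ).filter (fun c => c ∉ p ∧
      (∀ r ∈ p, r.1 = c.1 → r.2 < c.2) ∧
      (∀ r ∈ p, r.2 = c.2 → r.1 < c.1))).card

/-- The Garsia–Remmel `q`-rook number `R_k(λ) = ∑_p q^{inv(p)}`. -/
def qRook (q : K) (lam : ℕ → ℕ) (ℓ k : ℕ) : K :=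
  ∑ p ∈ placements lam ℓ k, q ^ rInv lam ℓ p

/-- The size `|λ| = λ_1 + ⋯ + λ_ℓ`. -/
def pSize (lam : ℕ → ℕ) (ℓ : ℕ) : ℕ := ∑ i ∈ Finset.Icc 1 ℓ, lam i

/-- The `q`-hit numbers `H_k^{m,n}(λ)` of `λ ⊆ n×m`, defined from the `q`-rook
numbers by the change of basis
`H_k^{m,n}(λ) = (q^{C(k,2)-|λ|}/[m-n]!) ∑_{i=k}^{n} R_i(λ) [m-i]! qbinom(i,k) (-1)^{i+k} q^{mi-C(i,2)}`. -/
def qHit (q : K) (m n : ℕ) (lam : ℕ → ℕ) (ℓ k : ℕ) : K :=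
  (q ^ ((k.choose 2 : ℤ) - (pSize lam ℓ : ℤ)) / qFact q (m - n)) *
    ∑ i ∈ Finset.Icc k n, qRook q lam ℓ i * qFact q (m - i) * qBinom q i k *
      (-1 : K) ^ (i + k) * q ^ ((m : ℤ) * (i : ℤ) - (i.choose 2 : ℤ))

/-- `lam : ℕ → ℕ` is a partition with exactly `ℓ` (positive) parts `lam 1 ≥ ⋯ ≥ lam ℓ ≥ 1`. -/
def IsPartition (lam : ℕ → ℕ) (ℓ : ℕ) : Prop :=
  (∀ i j, 1 ≤ i → i ≤ j → lam j ≤ lam i) ∧ (∀ i, ℓ < i → lam i = 0) ∧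
    (∀ i, 1 ≤ i → i ≤ ℓ → 1 ≤ lam i)

/-- `lam` is a partition with `ℓ` parts contained in an `n × m` board. -/
def IsPartitionIn (lam : ℕ → ℕ) (ℓ n m : ℕ) : Prop :=
  IsPartition lam ℓ ∧ ℓ ≤ n ∧ lam 1 ≤ m

/-- The rectangular partition `a^b` (`b` parts equal to `a`). -/
def rect (a b : ℕ) : ℕ → ℕ := fun i => if 1 ≤ i ∧ i ≤ b then a else 0

/-- The partition obtained from `lam` by deleting its `j`-th column. -/
def delCol (lam : ℕ → ℕ) (j : ℕ) : ℕ → ℕ :=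
  fun r => if j ≤ lam r then lam r - 1 else lam r

/-- The partition obtained from `lam` by deleting its `i`-th row. -/
def delRow (lam : ℕ → ℕ) (i : ℕ) : ℕ → ℕ :=
  fun r => if r < i then lam r else lam (r + 1)

/-- The `j`-th column length `λ'_j` of `lam` (with `ℓ` rows). -/
def conjP (lam : ℕ → ℕ) (ℓ j : ℕ) : ℕ :=
  ((Finset.Icc 1 ℓ).filter (fun r => j ≤ lam r)).card

-- basic lemmas
lemma mem_board {lam : ℕ → ℕ} {ℓ : ℕ} {c : ℕ × ℕ} :
    c ∈ board lam ℓ ↔ 1 ≤ c.1 ∧ c.1 ≤ ℓ ∧ 1 ≤ c.2 ∧ c.2 ≤ lam c.1 := by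
  simp only [board, Finset.mem_filter, Finset.mem_product, Finset.mem_Icc]
  constructor
  · rintro ⟨⟨⟨h1, h2⟩, h3, _⟩, h5⟩; exact ⟨h1, h2, h3, h5⟩
  · rintro ⟨h1, h2, h3, h5⟩
    exact ⟨⟨⟨h1, h2⟩, h3, le_trans h5 (Finset.le_sup (Finset.mem_Icc.2 ⟨h1, h2⟩))⟩, h5⟩

lemma mem_placements {lam : ℕ → ℕ} {ℓ k : ℕ} {p : Finset (ℕ × ℕ)} :
    p ∈ placements lam ℓ k ↔ (∀ c ∈ p, c ∈ board lam ℓ) ∧ p.card = k ∧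
      (∀ a ∈ p, ∀ b ∈ p, a ≠ b → a.1 ≠ b.1 ∧ a.2 ≠ b.2) := by
  simp only [placements, Finset.mem_filter, Finset.mem_powerset, Finset.subset_iff]

lemma rows_card {lam : ℕ → ℕ} {ℓ k : ℕ} {p : Finset (ℕ × ℕ)}
    (hp : p ∈ placements lam ℓ k) : (p.image Prod.fst).card = k := by
  rw [mem_placements] at hp
  rw [Finset.card_image_of_injOn, hp.2.1]
  intro a ha b hb hab
  by_contra h
  exact (hp.2.2 a ha b hb h).1 hab

lemma rows_subset {lam : ℕ → ℕ} {ℓ k : ℕ} {p : Finset (ℕ × ℕ)}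
    (hp : p ∈ placements lam ℓ k) : p.image Prod.fst ⊆ Finset.Icc 1 ℓ := by
  rw [mem_placements] at hp
  intro i hi
  obtain ⟨c, hc, rfl⟩ := Finset.mem_image.1 hi
  have := mem_board.1 (hp.1 c hc)
  exact Finset.mem_Icc.2 ⟨this.1, this.2.1⟩

lemma placements_eq_empty {lam : ℕ → ℕ} {ℓ k : ℕ} (h : ℓ < k) :
    placements lam ℓ k = ∅ := by
  rw [Finset.eq_empty_iff_forall_notMem]
  intro p hp
  have h1 := rows_card hp
  have h2 := Finset.card_le_card (rows_subset hp)
  rw [h1, Nat.card_Icc] at h2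
  omega

lemma placements_zero {lam : ℕ → ℕ} {ℓ : ℕ} : placements lam ℓ 0 = {∅} := by
  ext p
  rw [mem_placements]
  simp only [Finset.mem_singleton, Finset.card_eq_zero]
  constructor
  · rintro ⟨-, h, -⟩; exact h
  · rintro rfl; simp

-- q-arithmetic
lemma qInt_natCast (q : K) (hq1 : q ≠ 1) (n : ℕ) :
    qInt q (n : ℤ) = ∑ t ∈ Finset.range n, q ^ t := by
  rw [geom_sum_eq hq1, qInt, zpow_natCast]
  rw [div_eq_div_iff (sub_ne_zero.2 (Ne.symm hq1)) (sub_ne_zero.2 hq1)]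
  ring

lemma sum_pow_filter_lt (q : K) (F : Finset ℕ) :
    ∑ i ∈ F, q ^ (F.filter (fun j => i < j)).card = ∑ t ∈ Finset.range F.card, q ^ t := by
  generalize hn : F.card = n
  induction n generalizing F with
  | zero => rw [Finset.card_eq_zero] at hn; subst hn; simp
  | succ n ih =>
    have hne : F.Nonempty := by rw [← Finset.card_pos, hn]; omega
    set m := F.min' hne with hm
    have hmF : m ∈ F := F.min'_mem hne
    have h1 : F.filter (fun j => m < j) = F.erase m := by
      ext j
      simp only [Finset.mem_filter, Finset.mem_erase]
      constructor
      · rintro ⟨hj, hmj⟩; exact ⟨by omega, hj⟩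
      · rintro ⟨hj, hjF⟩
        exact ⟨hjF, lt_of_le_of_ne (F.min'_le j hjF) (Ne.symm hj)⟩
    have hcard : (F.erase m).card = n := by rw [Finset.card_erase_of_mem hmF, hn]; omega
    rw [← Finset.add_sum_erase F _ hmF, h1, hcard]
    have h2 : ∀ i ∈ F.erase m, (F.filter (fun j => i < j)).card =
        ((F.erase m).filter (fun j => i < j)).card := by
      intro i hi
      congr 1
      ext j
      simp only [Finset.mem_filter, Finset.mem_erase]
      constructor
      · rintro ⟨hj, hij⟩
        refine ⟨⟨?_, hj⟩, hij⟩
        have := F.min'_le i (Finset.mem_of_mem_erase hi)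
        omega
      · rintro ⟨⟨-, hj⟩, hij⟩; exact ⟨hj, hij⟩
    rw [Finset.sum_congr rfl (fun i hi => by rw [h2 i hi]), ih _ hcard,
      Finset.sum_range_succ]
    ring

-- shifting machinery
def colShift (c : ℕ × ℕ) : ℕ × ℕ := (c.1, c.2 + 1)
def colUnshift (c : ℕ × ℕ) : ℕ × ℕ := (c.1, c.2 - 1)
def dec (lam : ℕ → ℕ) : ℕ → ℕ := fun i => lam i - 1

lemma colShift_injective : Function.Injective colShift := by
  intro a b h
  simp only [colShift, Prod.mk.injEq] at h
  exact Prod.ext h.1 (by omega)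

lemma board_split {lam : ℕ → ℕ} {ℓ : ℕ} (hpos : ∀ i, 1 ≤ i → i ≤ ℓ → 1 ≤ lam i) :
    board lam ℓ = ((Finset.Icc 1 ℓ).image (fun i => (i, 1))) ∪
      (board (dec lam) ℓ).image colShift := by
  ext c
  obtain ⟨a, b⟩ := c
  simp only [Finset.mem_union, Finset.mem_image, mem_board, Finset.mem_Icc, dec, colShift,
    Prod.mk.injEq]
  constructor
  · rintro ⟨h1, h2, h3, h4⟩
    rcases Nat.eq_or_lt_of_le h3 with h | h
    · exact Or.inl ⟨a, ⟨h1, h2⟩, rfl, h⟩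
    · refine Or.inr ⟨(a, b - 1), ⟨h1, h2, ?_, ?_⟩, rfl, by omega⟩
      · show 1 ≤ b - 1; omega
      · show b - 1 ≤ lam a - 1; omega
  · rintro (⟨i, ⟨hi1, hi2⟩, rfl, rfl⟩ | ⟨⟨d1, d2⟩, ⟨h1, h2, h3, h4⟩, rfl, rfl⟩)
    · exact ⟨hi1, hi2, le_refl _, hpos i hi1 hi2⟩
    · have := hpos d1 h1 h2
      simp only at h3 h4 ⊢
      exact ⟨h1, h2, by omega, by omega⟩

lemma disj_split {ℓ : ℕ} {lam : ℕ → ℕ} :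
    Disjoint ((Finset.Icc 1 ℓ).image (fun i => (i, 1)))
      ((board (dec lam) ℓ).image colShift) := by
  rw [Finset.disjoint_left]
  rintro c hc hc'
  simp only [Finset.mem_image] at hc hc'
  obtain ⟨i, -, rfl⟩ := hc
  obtain ⟨d, hd, h⟩ := hc'
  have := (mem_board.1 hd).2.2.1
  simp only [colShift, Prod.mk.injEq] at h
  omega

/-- The shifted-part predicate equivalence -/
lemma shift_ok {p : Finset (ℕ × ℕ)} (hp : ∀ r ∈ p, 1 ≤ r.2) {c : ℕ × ℕ} (hc : 1 ≤ c.2) :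
    ((c.1, c.2 + 1) ∉ p ∧ (∀ r ∈ p, r.1 = c.1 → r.2 < c.2 + 1) ∧
      (∀ r ∈ p, r.2 = c.2 + 1 → r.1 < c.1)) ↔
    (c ∉ (p.filter (fun r => 2 ≤ r.2)).image colUnshift ∧
      (∀ r ∈ (p.filter (fun r => 2 ≤ r.2)).image colUnshift, r.1 = c.1 → r.2 < c.2) ∧
      (∀ r ∈ (p.filter (fun r => 2 ≤ r.2)).image colUnshift, r.2 = c.2 → r.1 < c.1)) := by
  constructor
  · rintro ⟨h1, h2, h3⟩
    refine ⟨?_, ?_, ?_⟩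
    · intro hmem
      obtain ⟨r, hr, hrc⟩ := Finset.mem_image.1 hmem
      rw [Finset.mem_filter] at hr
      apply h1
      subst hrc
      have hr2 := hr.2
      simp only [colUnshift] at hr2 ⊢
      have he : (r.1, r.2 - 1 + 1) = r := Prod.ext rfl (by omega)
      rw [he]
      exact hr.1
    · intro r hr h
      obtain ⟨r', hr', rfl⟩ := Finset.mem_image.1 hr
      rw [Finset.mem_filter] at hr'
      have := h2 r' hr'.1 (by simpa [colUnshift] using h)
      simp only [colUnshift]
      omega
    · intro r hr h
      obtain ⟨r', hr', rfl⟩ := Finset.mem_image.1 hr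
      rw [Finset.mem_filter] at hr'
      refine h3 r' hr'.1 ?_
      simp only [colUnshift] at h
      have := hr'.2
      omega
  · rintro ⟨h1, h2, h3⟩
    refine ⟨?_, ?_, ?_⟩
    · intro hmem
      apply h1
      rw [Finset.mem_image]
      exact ⟨(c.1, c.2 + 1), Finset.mem_filter.2 ⟨hmem, by show 2 ≤ c.2 + 1; omega⟩,
        by simp only [colUnshift]; exact Prod.ext rfl (by omega)⟩
    · intro r hr h
      by_cases h2c : 2 ≤ r.2
      · have := h2 (colUnshift r) (Finset.mem_image.2 ⟨r, Finset.mem_filter.2 ⟨hr, h2c⟩, rfl⟩)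
          (by simpa [colUnshift] using h)
        simp only [colUnshift] at this
        omega
      · omega
    · intro r hr h
      have h2c : 2 ≤ r.2 := by omega
      refine h3 (colUnshift r) (Finset.mem_image.2 ⟨r, Finset.mem_filter.2 ⟨hr, h2c⟩, rfl⟩) ?_
      simp only [colUnshift]
      omega

lemma rInv_split {lam : ℕ → ℕ} {ℓ : ℕ} (hpos : ∀ i, 1 ≤ i → i ≤ ℓ → 1 ≤ lam i)
    {p : Finset (ℕ × ℕ)} (hp1 : ∀ r ∈ p, 1 ≤ r.2) :
    rInv lam ℓ p = ((Finset.Icc 1 ℓ).filter (fun i =>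
        (i, 1) ∉ p ∧ (∀ r ∈ p, r.1 = i → r.2 < 1) ∧ (∀ r ∈ p, r.2 = 1 → r.1 < i))).card +
      rInv (dec lam) ℓ ((p.filter (fun r => 2 ≤ r.2)).image colUnshift) := by
  unfold rInv
  rw [board_split hpos, Finset.filter_union,
    Finset.card_union_of_disjoint (Finset.disjoint_filter_filter disj_split)]
  congr 1
  · rw [Finset.filter_image, Finset.card_image_of_injective _
      (fun a b h => by simpa using congrArg Prod.fst h)]
  · rw [Finset.filter_image, Finset.card_image_of_injective _ colShift_injective]
    congr 1
    apply Finset.filter_congr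
    intro c hc
    have hc2 : 1 ≤ c.2 := (mem_board.1 hc).2.2.1
    simpa [colShift] using shift_ok hp1 hc2

lemma cols_pos {lam : ℕ → ℕ} {ℓ k : ℕ} {p : Finset (ℕ × ℕ)}
    (hp : p ∈ placements lam ℓ k) : ∀ r ∈ p, 1 ≤ r.2 := fun r hr =>
  (mem_board.1 ((mem_placements.1 hp).1 r hr)).2.2.1

lemma invA {lam : ℕ → ℕ} {ℓ k : ℕ} (hpos : ∀ i, 1 ≤ i → i ≤ ℓ → 1 ≤ lam i)
    {p : Finset (ℕ × ℕ)} (hp : p ∈ placements lam ℓ k) (hcol : ∀ c ∈ p, c.2 ≠ 1) :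
    rInv lam ℓ p = (ℓ - k) + rInv (dec lam) ℓ (p.image colUnshift) := by
  have hp1 := cols_pos hp
  rw [rInv_split hpos hp1]
  have hfa : p.filter (fun r => 2 ≤ r.2) = p := by
    apply Finset.filter_true_of_mem
    intro r hr
    have := hp1 r hr; have := hcol r hr; omega
  rw [hfa]
  congr 1
  have heq : (Finset.Icc 1 ℓ).filter (fun i =>
      (i, 1) ∉ p ∧ (∀ r ∈ p, r.1 = i → r.2 < 1) ∧ (∀ r ∈ p, r.2 = 1 → r.1 < i)) =
      Finset.Icc 1 ℓ \ p.image Prod.fst := by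
    ext i
    simp only [Finset.mem_filter, Finset.mem_sdiff, Finset.mem_image]
    constructor
    · rintro ⟨hi, -, h2, -⟩
      refine ⟨hi, fun hex => ?_⟩
      obtain ⟨r, hr, hri⟩ := hex
      have := h2 r hr hri
      have := hp1 r hr
      omega
    · rintro ⟨hi, h⟩
      exact ⟨hi, fun hmem => h ⟨(i, 1), hmem, rfl⟩,
        fun r hr hri => absurd ⟨r, hr, hri⟩ h,
        fun r hr hr2 => (hcol r hr hr2).elim⟩
  rw [heq, Finset.card_sdiff_of_subset (rows_subset hp), rows_card hp, Nat.card_Icc]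
  omega

lemma erase_filter_eq {lam : ℕ → ℕ} {ℓ k : ℕ} {p : Finset (ℕ × ℕ)} {i : ℕ}
    (hp : p ∈ placements lam ℓ k) (hi : (i, 1) ∈ p) :
    p.filter (fun r => 2 ≤ r.2) = p.erase (i, 1) := by
  have hp1 := cols_pos hp
  have na := (mem_placements.1 hp).2.2
  ext r
  simp only [Finset.mem_filter, Finset.mem_erase]
  constructor
  · rintro ⟨hr, h2⟩
    refine ⟨?_, hr⟩
    rintro rfl; simp at h2
  · rintro ⟨hne, hr⟩
    refine ⟨hr, ?_⟩
    have := hp1 r hr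
    have := (na r hr (i, 1) hi hne).2
    simp only at this
    omega

lemma invB {lam : ℕ → ℕ} {ℓ k : ℕ} (hpos : ∀ i, 1 ≤ i → i ≤ ℓ → 1 ≤ lam i)
    {p : Finset (ℕ × ℕ)} {i : ℕ} (hp : p ∈ placements lam ℓ k) (hi : (i, 1) ∈ p) :
    rInv lam ℓ p = ((Finset.Icc 1 ℓ).filter (fun i' => i < i' ∧
        i' ∉ (p.erase (i, 1)).image Prod.fst)).card +
      rInv (dec lam) ℓ ((p.erase (i, 1)).image colUnshift) := by
  have hp1 := cols_pos hp
  have na := (mem_placements.1 hp).2.2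
  rw [rInv_split hpos hp1, erase_filter_eq hp hi]
  congr 2
  apply Finset.filter_congr
  intro i' hi'
  simp only [Finset.mem_image, eq_iff_iff]
  constructor
  · rintro ⟨h1, h2, h3⟩
    have hlt : i < i' := h3 (i, 1) hi rfl
    refine ⟨hlt, fun hex => ?_⟩
    obtain ⟨r, hr, hri⟩ := hex
    have := h2 r (Finset.mem_of_mem_erase hr) hri
    have := hp1 r (Finset.mem_of_mem_erase hr)
    omega
  · rintro ⟨hlt, h⟩
    refine ⟨?_, ?_, ?_⟩
    · intro hmem
      have hne : ((i', 1) : ℕ × ℕ) ≠ (i, 1) := by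
        intro heq; simp only [Prod.mk.injEq] at heq; omega
      exact h ⟨(i', 1), Finset.mem_erase.2 ⟨hne, hmem⟩, rfl⟩
    · intro r hr hri
      by_cases hre : r = (i, 1)
      · subst hre; simp only at hri; omega
      · exact absurd ⟨r, Finset.mem_erase.2 ⟨hre, hr⟩, hri⟩ h
    · intro r hr hr2
      by_cases hre : r = (i, 1)
      · subst hre; exact hlt
      · have := (na r hr (i, 1) hi hre).2
        simp only at this
        omega

lemma unshift_mem_placements {lam : ℕ → ℕ} {ℓ k : ℕ} {p : Finset (ℕ × ℕ)}
    (hp : p ∈ placements lam ℓ k) (hcol : ∀ c ∈ p, 2 ≤ c.2) :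
    p.image colUnshift ∈ placements (dec lam) ℓ k := by
  obtain ⟨hb, hc, na⟩ := mem_placements.1 hp
  have hinj : Set.InjOn colUnshift p := by
    intro a ha b hb hab
    simp only [colUnshift, Prod.mk.injEq] at hab
    by_contra hne
    have h1 := (na a ha b hb hne).2
    have := hcol a ha; have := hcol b hb
    omega
  rw [mem_placements]
  refine ⟨?_, ?_, ?_⟩
  · intro c hcm
    obtain ⟨r, hr, rfl⟩ := Finset.mem_image.1 hcm
    have h := mem_board.1 (hb r hr)
    have h2 := hcol r hr
    rw [mem_board]
    simp only [colUnshift, dec]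
    refine ⟨h.1, h.2.1, by omega, by omega⟩
  · rw [Finset.card_image_of_injOn hinj, hc]
  · intro a ha b hb' hne
    obtain ⟨ra, hra, rfl⟩ := Finset.mem_image.1 ha
    obtain ⟨rb, hrb, rfl⟩ := Finset.mem_image.1 hb'
    have hrne : ra ≠ rb := fun h => hne (by rw [h])
    have h1 := na ra hra rb hrb hrne
    have := hcol ra hra; have := hcol rb hrb
    simp only [colUnshift, Ne, Prod.mk.injEq]
    constructor
    · exact h1.1
    · have := h1.2; omega

lemma shift_mem_placements {lam : ℕ → ℕ} {ℓ k : ℕ}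
    (hpos : ∀ i, 1 ≤ i → i ≤ ℓ → 1 ≤ lam i) {p : Finset (ℕ × ℕ)}
    (hp : p ∈ placements (dec lam) ℓ k) :
    p.image colShift ∈ placements lam ℓ k := by
  obtain ⟨hb, hc, na⟩ := mem_placements.1 hp
  rw [mem_placements]
  refine ⟨?_, ?_, ?_⟩
  · intro c hcm
    obtain ⟨r, hr, rfl⟩ := Finset.mem_image.1 hcm
    have h := mem_board.1 (hb r hr)
    simp only [dec] at h
    have := hpos r.1 h.1 h.2.1
    rw [mem_board]
    simp only [colShift]
    refine ⟨h.1, h.2.1, by omega, by omega⟩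
  · rw [Finset.card_image_of_injective _ colShift_injective, hc]
  · intro a ha b hb' hne
    obtain ⟨ra, hra, rfl⟩ := Finset.mem_image.1 ha
    obtain ⟨rb, hrb, rfl⟩ := Finset.mem_image.1 hb'
    have hrne : ra ≠ rb := fun h => hne (by rw [h])
    have h1 := na ra hra rb hrb hrne
    simp only [colShift, Ne, Prod.mk.injEq]
    exact ⟨h1.1, fun h => h1.2 (by omega)⟩

lemma shift_cols {p : Finset (ℕ × ℕ)} (hp1 : ∀ c ∈ p, 1 ≤ c.2) :
    ∀ c ∈ p.image colShift, 2 ≤ c.2 := by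
  intro c hc
  obtain ⟨r, hr, rfl⟩ := Finset.mem_image.1 hc
  have := hp1 r hr
  show 2 ≤ r.2 + 1
  omega

lemma shift_unshift {p : Finset (ℕ × ℕ)} (hcol : ∀ c ∈ p, 2 ≤ c.2) :
    (p.image colUnshift).image colShift = p := by
  rw [Finset.image_image]
  have heq : Set.EqOn (colShift ∘ colUnshift) id (p : Set (ℕ × ℕ)) := by
    intro c hc
    have := hcol c (Finset.mem_coe.1 hc)
    show ((c.1 : ℕ), c.2 - 1 + 1) = c
    exact Prod.ext rfl (by omega)
  rw [Finset.image_congr heq, Finset.image_id]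

lemma unshift_shift {p : Finset (ℕ × ℕ)} :
    (p.image colShift).image colUnshift = p := by
  rw [Finset.image_image]
  have heq : Set.EqOn (colUnshift ∘ colShift) id (p : Set (ℕ × ℕ)) := by
    intro c _
    show ((c.1 : ℕ), c.2 + 1 - 1) = c
    exact Prod.ext rfl (by omega)
  rw [Finset.image_congr heq, Finset.image_id]

lemma erase_mem_placements {lam : ℕ → ℕ} {ℓ k : ℕ} {p : Finset (ℕ × ℕ)} {c : ℕ × ℕ}
    (hp : p ∈ placements lam ℓ (k + 1)) (hc : c ∈ p) :
    p.erase c ∈ placements lam ℓ k := by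
  obtain ⟨hb, hcard, na⟩ := mem_placements.1 hp
  rw [mem_placements]
  refine ⟨fun a ha => hb a (Finset.mem_of_mem_erase ha), ?_,
    fun a ha b hb' hne => na a (Finset.mem_of_mem_erase ha) b (Finset.mem_of_mem_erase hb') hne⟩
  rw [Finset.card_erase_of_mem hc, hcard]
  omega

lemma insert_mem_placements {lam : ℕ → ℕ} {ℓ k i : ℕ}
    (hpos : ∀ i, 1 ≤ i → i ≤ ℓ → 1 ≤ lam i) (hi1 : 1 ≤ i) (hi2 : i ≤ ℓ)
    {p : Finset (ℕ × ℕ)} (hp : p ∈ placements (dec lam) ℓ k)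
    (hrow : ∀ c ∈ p, c.1 ≠ i) :
    insert (i, 1) (p.image colShift) ∈ placements lam ℓ (k + 1) := by
  have hsh := shift_mem_placements hpos hp
  have hp1 := cols_pos hp
  obtain ⟨hb, hcard, na⟩ := mem_placements.1 hsh
  have hcols2 := shift_cols hp1
  have hnotmem : ((i, 1) : ℕ × ℕ) ∉ p.image colShift := by
    intro h
    have := hcols2 (i, 1) h
    simp at this
  rw [mem_placements]
  refine ⟨?_, ?_, ?_⟩
  · intro c hcm
    rcases Finset.mem_insert.1 hcm with rfl | h
    · exact mem_board.2 ⟨hi1, hi2, le_refl 1, hpos i hi1 hi2⟩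
    · exact hb c h
  · rw [Finset.card_insert_of_notMem hnotmem, hcard]
  · have key : ∀ c ∈ p.image colShift, c.1 ≠ i ∧ c.2 ≠ 1 := by
      intro c hcm
      obtain ⟨r, hr, rfl⟩ := Finset.mem_image.1 hcm
      refine ⟨hrow r hr, ?_⟩
      have := hp1 r hr
      show ¬ r.2 + 1 = 1
      omega
    intro a ha b hb' hne
    rcases Finset.mem_insert.1 ha with rfl | ha2
    · rcases Finset.mem_insert.1 hb' with rfl | hb2
      · exact (hne rfl).elim
      · have := key b hb2; exact ⟨fun h => this.1 h.symm, fun h => this.2 h.symm⟩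
    · rcases Finset.mem_insert.1 hb' with rfl | hb2
      · have := key a ha2; exact ⟨this.1, this.2⟩
      · exact na a ha2 b hb2 hne

lemma rows_unshift {s : Finset (ℕ × ℕ)} :
    (s.image colUnshift).image Prod.fst = s.image Prod.fst := by
  rw [Finset.image_image]; rfl

lemma sumA (q : K) {lam : ℕ → ℕ} {ℓ k : ℕ} (hpos : ∀ i, 1 ≤ i → i ≤ ℓ → 1 ≤ lam i) :
    ∑ p ∈ (placements lam ℓ k).filter (fun p => ∀ c ∈ p, c.2 ≠ 1), q ^ rInv lam ℓ p =
      q ^ (ℓ - k) * qRook q (dec lam) ℓ k := by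
  rw [qRook, Finset.mul_sum]
  refine Finset.sum_bij' (fun p _ => p.image colUnshift) (fun p _ => p.image colShift)
    ?_ ?_ ?_ ?_ ?_
  · intro p hp
    rw [Finset.mem_filter] at hp
    exact unshift_mem_placements hp.1
      (fun c hc => by have := cols_pos hp.1 c hc; have := hp.2 c hc; omega)
  · intro p hp
    refine Finset.mem_filter.2 ⟨shift_mem_placements hpos hp, ?_⟩
    intro c hc
    have := shift_cols (cols_pos hp) c hc
    omega
  · intro p hp
    rw [Finset.mem_filter] at hp
    exact shift_unshift (fun c hc => by have := cols_pos hp.1 c hc; have := hp.2 c hc; omega)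
  · intro p _
    exact unshift_shift
  · intro p hp
    rw [Finset.mem_filter] at hp
    rw [invA hpos hp.1 hp.2, pow_add]

lemma sumB (q : K) (hq1 : q ≠ 1) {lam : ℕ → ℕ} {ℓ k : ℕ}
    (hpos : ∀ i, 1 ≤ i → i ≤ ℓ → 1 ≤ lam i) :
    ∑ p ∈ (placements lam ℓ (k + 1)).filter (fun p => ¬ ∀ c ∈ p, c.2 ≠ 1),
        q ^ rInv lam ℓ p =
      qInt q ((ℓ - k : ℕ) : ℤ) * qRook q (dec lam) ℓ k := by
  classical
  -- split according to the row of the column-1 rook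
  have hsplit : (placements lam ℓ (k + 1)).filter (fun p => ¬ ∀ c ∈ p, c.2 ≠ 1) =
      (Finset.Icc 1 ℓ).biUnion
        (fun i => (placements lam ℓ (k + 1)).filter (fun p => (i, 1) ∈ p)) := by
    ext p
    simp only [Finset.mem_filter, Finset.mem_biUnion]
    constructor
    · rintro ⟨hp, hne⟩
      push_neg at hne
      obtain ⟨c, hc, hc1⟩ := hne
      have hcb := mem_board.1 ((mem_placements.1 hp).1 c hc)
      have hceq : c = (c.1, 1) := Prod.ext rfl (by omega)
      exact ⟨c.1, Finset.mem_Icc.2 ⟨hcb.1, hcb.2.1⟩, hp, hceq ▸ hc⟩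
    · rintro ⟨i, _, hp, hmem⟩
      exact ⟨hp, fun hall => hall (i, 1) hmem rfl⟩
  have hdisj : (Finset.Icc 1 ℓ : Set ℕ).PairwiseDisjoint
      (fun i => (placements lam ℓ (k + 1)).filter (fun p => (i, 1) ∈ p)) := by
    intro i _ j _ hij
    rw [Function.onFun, Finset.disjoint_left]
    intro p hp hp'
    rw [Finset.mem_filter] at hp hp'
    have na := (mem_placements.1 hp.1).2.2
    have hne : ((i, 1) : ℕ × ℕ) ≠ (j, 1) := fun h => hij (by simpa using congrArg Prod.fst h)
    exact (na (i, 1) hp.2 (j, 1) hp'.2 hne).2 rfl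
  rw [hsplit, Finset.sum_biUnion hdisj]
  -- rewrite each inner sum via the erase/insert bijection
  have hstep : ∀ i ∈ Finset.Icc 1 ℓ,
      ∑ p ∈ (placements lam ℓ (k + 1)).filter (fun p => (i, 1) ∈ p), q ^ rInv lam ℓ p =
      ∑ p' ∈ (placements (dec lam) ℓ k).filter (fun p' => ∀ c ∈ p', c.1 ≠ i),
        q ^ ((Finset.Icc 1 ℓ).filter
            (fun i' => i < i' ∧ i' ∉ p'.image Prod.fst)).card * q ^ rInv (dec lam) ℓ p' := by
    intro i hi
    rw [Finset.mem_Icc] at hi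
    refine Finset.sum_bij' (fun p _ => (p.erase (i, 1)).image colUnshift)
      (fun p' _ => insert (i, 1) (p'.image colShift)) ?_ ?_ ?_ ?_ ?_
    · intro p hp
      rw [Finset.mem_filter] at hp
      have hcols2 : ∀ r ∈ p.erase (i, 1), 2 ≤ r.2 := by
        rw [← erase_filter_eq hp.1 hp.2]
        exact fun r hr => (Finset.mem_filter.1 hr).2
      refine Finset.mem_filter.2 ⟨unshift_mem_placements (erase_mem_placements hp.1 hp.2) hcols2, ?_⟩
      intro c hc
      obtain ⟨r, hr, rfl⟩ := Finset.mem_image.1 hc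
      have hrne := Finset.ne_of_mem_erase hr
      have na := (mem_placements.1 hp.1).2.2
      exact (na r (Finset.mem_of_mem_erase hr) (i, 1) hp.2 hrne).1
    · intro p' hp'
      rw [Finset.mem_filter] at hp'
      refine Finset.mem_filter.2 ⟨insert_mem_placements hpos hi.1 hi.2 hp'.1 hp'.2, ?_⟩
      exact Finset.mem_insert_self _ _
    · intro p hp
      rw [Finset.mem_filter] at hp
      have hcols2 : ∀ r ∈ p.erase (i, 1), 2 ≤ r.2 := by
        rw [← erase_filter_eq hp.1 hp.2]
        exact fun r hr => (Finset.mem_filter.1 hr).2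
      show insert (i, 1) (((p.erase (i, 1)).image colUnshift).image colShift) = p
      rw [shift_unshift hcols2, Finset.insert_erase hp.2]
    · intro p' hp'
      rw [Finset.mem_filter] at hp'
      have hnm : ((i, 1) : ℕ × ℕ) ∉ p'.image colShift := by
        intro h
        have := shift_cols (cols_pos hp'.1) _ h
        simp at this
      show ((insert (i, 1) (p'.image colShift)).erase (i, 1)).image colUnshift = p'
      rw [Finset.erase_insert hnm, unshift_shift]
    · intro p hp
      rw [Finset.mem_filter] at hp
      rw [invB hpos hp.1 hp.2, pow_add, rows_unshift]
  rw [Finset.sum_congr rfl hstep]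
  -- swap the two sums
  have hswap : ∀ i ∈ Finset.Icc 1 ℓ,
      ∑ p' ∈ (placements (dec lam) ℓ k).filter (fun p' => ∀ c ∈ p', c.1 ≠ i),
        q ^ ((Finset.Icc 1 ℓ).filter
          (fun i' => i < i' ∧ i' ∉ p'.image Prod.fst)).card * q ^ rInv (dec lam) ℓ p' =
      ∑ p' ∈ placements (dec lam) ℓ k,
        (if (∀ c ∈ p', c.1 ≠ i) then
          q ^ ((Finset.Icc 1 ℓ).filter
            (fun i' => i < i' ∧ i' ∉ p'.image Prod.fst)).card * q ^ rInv (dec lam) ℓ p'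
         else 0) := by
    intro i _
    rw [Finset.sum_filter]
  rw [Finset.sum_congr rfl hswap, Finset.sum_comm]
  rw [qRook, Finset.mul_sum]
  apply Finset.sum_congr rfl
  intro p' hp'
  -- now a single placement p'; sum over rows i
  set F := Finset.Icc 1 ℓ \ p'.image Prod.fst with hF
  have hFcard : F.card = ℓ - k := by
    rw [hF, Finset.card_sdiff_of_subset (rows_subset hp'), rows_card hp', Nat.card_Icc]
    omega
  have h1 : ∀ i ∈ Finset.Icc 1 ℓ,
      (if (∀ c ∈ p', c.1 ≠ i) then
        q ^ ((Finset.Icc 1 ℓ).filter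
          (fun i' => i < i' ∧ i' ∉ p'.image Prod.fst)).card * q ^ rInv (dec lam) ℓ p'
       else 0) =
      (if i ∈ F then q ^ (F.filter (fun j => i < j)).card * q ^ rInv (dec lam) ℓ p'
       else 0) := by
    intro i hi
    have hiff : (∀ c ∈ p', c.1 ≠ i) ↔ i ∈ F := by
      rw [hF, Finset.mem_sdiff]
      simp only [Finset.mem_image]
      constructor
      · intro h
        exact ⟨hi, fun hex => by obtain ⟨c, hc, hci⟩ := hex; exact h c hc hci⟩
      · rintro ⟨-, h⟩ c hc hci
        exact h ⟨c, hc, hci⟩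
    by_cases hcase : ∀ c ∈ p', c.1 ≠ i
    · rw [if_pos hcase, if_pos (hiff.1 hcase)]
      have hfe : (Finset.Icc 1 ℓ).filter (fun i' => i < i' ∧ i' ∉ p'.image Prod.fst) =
          F.filter (fun j => i < j) := by
        rw [hF]
        ext j
        simp only [Finset.mem_filter, Finset.mem_sdiff]
        tauto
      rw [hfe]
    · rw [if_neg hcase, if_neg (fun h => hcase (hiff.2 h))]
  rw [Finset.sum_congr rfl h1]
  have h2 : ∑ i ∈ Finset.Icc 1 ℓ,
      (if i ∈ F then q ^ (F.filter (fun j => i < j)).card * q ^ rInv (dec lam) ℓ p'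
       else 0) =
      ∑ i ∈ F, q ^ (F.filter (fun j => i < j)).card * q ^ rInv (dec lam) ℓ p' := by
    rw [← Finset.sum_filter]
    congr 1
    rw [hF]
    ext j
    simp only [Finset.mem_filter, Finset.mem_sdiff]
    tauto
  rw [h2, ← Finset.sum_mul, sum_pow_filter_lt, hFcard, ← qInt_natCast q hq1]

lemma prod_Icc_one (f : ℕ → K) (ℓ : ℕ) :
    ∏ i ∈ Finset.Icc 1 ℓ, f i = ∏ t ∈ Finset.range ℓ, f (t + 1) := by
  induction ℓ with
  | zero => simp
  | succ n ih =>
    rw [Finset.prod_range_succ, ← ih, Finset.prod_Icc_succ_top (by omega)]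

lemma qRook_recS (q : K) (hq1 : q ≠ 1) {lam : ℕ → ℕ} {ℓ k : ℕ}
    (hpos : ∀ i, 1 ≤ i → i ≤ ℓ → 1 ≤ lam i) :
    qRook q lam ℓ (k + 1) = q ^ (ℓ - (k + 1)) * qRook q (dec lam) ℓ (k + 1) +
      qInt q ((ℓ - k : ℕ) : ℤ) * qRook q (dec lam) ℓ k := by
  rw [qRook, ← Finset.sum_filter_add_sum_filter_not (placements lam ℓ (k + 1))
    (fun p => ∀ c ∈ p, c.2 ≠ 1), sumA q hpos, sumB q hq1 hpos]

lemma qRook_rec0 (q : K) {lam : ℕ → ℕ} {ℓ : ℕ}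
    (hpos : ∀ i, 1 ≤ i → i ≤ ℓ → 1 ≤ lam i) :
    qRook q lam ℓ 0 = q ^ ℓ * qRook q (dec lam) ℓ 0 := by
  rw [qRook, ← Finset.sum_filter_add_sum_filter_not (placements lam ℓ 0)
    (fun p => ∀ c ∈ p, c.2 ≠ 1), sumA q hpos]
  have hempty : (placements lam ℓ 0).filter (fun p => ¬ ∀ c ∈ p, c.2 ≠ 1) = ∅ := by
    rw [placements_zero]
    rw [Finset.filter_singleton]
    simp
  rw [hempty]
  simp [Nat.sub_zero]

lemma qFall_succ_right (q : K) (x : ℤ) (m : ℕ) :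
    qFall q x (m + 1) = qFall q x m * qInt q (x - m) := Finset.prod_range_succ _ _

lemma qFall_succ_left (q : K) (x : ℤ) (m : ℕ) :
    qFall q x (m + 1) = qInt q x * qFall q (x - 1) m := by
  rw [qFall, Finset.prod_range_succ', qFall]
  rw [Finset.prod_congr rfl (fun t _ => by
    show qInt q (x - ((t : ℕ) + 1 : ℕ)) = qInt q (x - 1 - t)
    congr 1
    push_cast
    ring)]
  simp only [Nat.cast_zero, sub_zero]
  ring

lemma qInt_combine (q : K) (hq0 : q ≠ 0) (hq1 : q ≠ 1) (b : ℕ) (x : ℤ) :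
    q ^ (b + 1) * qInt q (x - b) + qInt q (((b : ℕ) + 1 : ℕ) : ℤ) = qInt q (x + 1) := by
  have h2 : q ^ (b + 1) * q ^ (x - (b : ℤ)) = q ^ (x + 1) := by
    rw [← zpow_natCast q (b + 1), ← zpow_add₀ hq0]
    congr 1
    push_cast
    ring
  rw [qInt, qInt, qInt, ← mul_div_assoc, ← add_div]
  congr 1
  rw [zpow_natCast]
  push_cast
  linear_combination -h2

lemma qFall_combine (q : K) (hq0 : q ≠ 0) (hq1 : q ≠ 1) (b : ℕ) (x : ℤ) :
    q ^ (b + 1) * qFall q x (b + 1) + qInt q (((b : ℕ) + 1 : ℕ) : ℤ) * qFall q x b =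
      qFall q (x + 1) (b + 1) := by
  rw [qFall_succ_right, qFall_succ_left]
  have hx : x + 1 - 1 = x := by ring
  rw [hx, ← qInt_combine q hq0 hq1 b x]
  ring

lemma board_strip {lam : ℕ → ℕ} {ℓ : ℕ} (h : lam (ℓ + 1) = 0) :
    board lam (ℓ + 1) = board lam ℓ := by
  ext c
  rw [mem_board, mem_board]
  constructor
  · rintro ⟨h1, h2, h3, h4⟩
    refine ⟨h1, ?_, h3, h4⟩
    rcases Nat.lt_or_ge c.1 (ℓ + 1) with hc | hc
    · omega
    · have : c.1 = ℓ + 1 := by omega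
      rw [this, h] at h4
      omega
  · rintro ⟨h1, h2, h3, h4⟩
    exact ⟨h1, by omega, h3, h4⟩

lemma qRook_strip (q : K) {lam : ℕ → ℕ} {ℓ : ℕ} (h : lam (ℓ + 1) = 0) (k : ℕ) :
    qRook q lam (ℓ + 1) k = qRook q lam ℓ k := by
  have hp : placements lam (ℓ + 1) k = placements lam ℓ k := by
    unfold placements
    rw [board_strip h]
  have hr : ∀ p, rInv lam (ℓ + 1) p = rInv lam ℓ p := by
    intro p
    unfold rInv
    rw [board_strip h]
  unfold qRook
  rw [hp]
  exact Finset.sum_congr rfl (fun p _ => by rw [hr])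

lemma board_nil (lam : ℕ → ℕ) : board lam 0 = ∅ := by
  ext c
  rw [mem_board]
  simp only [Finset.notMem_empty, iff_false]
  rintro ⟨h1, h2, -⟩
  omega

lemma qRook_nil (q : K) (lam : ℕ → ℕ) : qRook q lam 0 0 = 1 := by
  rw [qRook, placements_zero, Finset.sum_singleton, rInv, board_nil]
  simp

lemma GS_nil (q : K) (lam : ℕ → ℕ) (x : ℤ) :
    ∑ k ∈ Finset.range (0 + 1), qRook q lam 0 k * qFall q x (0 - k) =
      ∏ i ∈ Finset.Icc 1 0, qInt q (x + (lam (0 - i + 1) : ℤ) - (i : ℤ) + 1) := by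
  rw [Finset.sum_range_one, qRook_nil]
  have : Finset.Icc 1 0 = (∅ : Finset ℕ) := Finset.Icc_eq_empty (by omega)
  rw [this]
  simp [qFall]

lemma GS (q : K) (hq0 : q ≠ 0) (hq1 : q ≠ 1) :
    ∀ n ℓ (lam : ℕ → ℕ), ℓ + pSize lam ℓ ≤ n →
      (∀ i j, 1 ≤ i → i ≤ j → j ≤ ℓ → lam j ≤ lam i) → ∀ x : ℤ,
      ∑ k ∈ Finset.range (ℓ + 1), qRook q lam ℓ k * qFall q x (ℓ - k) =
        ∏ i ∈ Finset.Icc 1 ℓ, qInt q (x + (lam (ℓ - i + 1) : ℤ) - (i : ℤ) + 1) := by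
  intro n
  induction n with
  | zero =>
    intro ℓ lam hn mono x
    have hℓ : ℓ = 0 := by omega
    subst hℓ
    exact GS_nil q lam x
  | succ n ih =>
    intro ℓ lam hn mono x
    match ℓ with
    | 0 => exact GS_nil q lam x
    | ℓ + 1 =>
      have hps : pSize lam (ℓ + 1) = pSize lam ℓ + lam (ℓ + 1) := by
        rw [pSize, pSize, Finset.sum_Icc_succ_top (by omega)]
      by_cases h0 : lam (ℓ + 1) = 0
      · -- strip the empty last row
        have hmono' : ∀ i j, 1 ≤ i → i ≤ j → j ≤ ℓ → lam j ≤ lam i :=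
          fun i j h1 h2 h3 => mono i j h1 h2 (by omega)
        have hmeas : ℓ + pSize lam ℓ ≤ n := by omega
        have ihv := ih ℓ lam hmeas hmono' (x - 1)
        have hz : qRook q lam ℓ (ℓ + 1) = 0 := by
          rw [qRook, placements_eq_empty (Nat.lt_succ_self ℓ)]
          simp
        calc ∑ k ∈ Finset.range (ℓ + 1 + 1), qRook q lam (ℓ + 1) k * qFall q x (ℓ + 1 - k)
            = ∑ k ∈ Finset.range (ℓ + 1 + 1), qRook q lam ℓ k * qFall q x (ℓ + 1 - k) := by
              refine Finset.sum_congr rfl (fun k _ => ?_)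
              rw [qRook_strip q h0]
          _ = ∑ k ∈ Finset.range (ℓ + 1), qRook q lam ℓ k * qFall q x (ℓ + 1 - k) := by
              rw [Finset.sum_range_succ, hz]
              simp
          _ = ∑ k ∈ Finset.range (ℓ + 1), qInt q x * (qRook q lam ℓ k * qFall q (x - 1) (ℓ - k)) := by
              refine Finset.sum_congr rfl (fun k hk => ?_)
              rw [Finset.mem_range] at hk
              have h1 : ℓ + 1 - k = (ℓ - k) + 1 := by omega
              rw [h1, qFall_succ_left]
              ring
          _ = qInt q x * ∑ k ∈ Finset.range (ℓ + 1), qRook q lam ℓ k * qFall q (x - 1) (ℓ - k) := by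
              rw [Finset.mul_sum]
          _ = qInt q x *
              ∏ i ∈ Finset.Icc 1 ℓ, qInt q ((x - 1) + (lam (ℓ - i + 1) : ℤ) - (i : ℤ) + 1) := by
              rw [ihv]
          _ = ∏ i ∈ Finset.Icc 1 (ℓ + 1), qInt q (x + (lam (ℓ + 1 - i + 1) : ℤ) - (i : ℤ) + 1) := by
              rw [prod_Icc_one (fun i => qInt q (x + (lam (ℓ + 1 - i + 1) : ℤ) - (i : ℤ) + 1)),
                Finset.prod_range_succ', prod_Icc_one]
              have hf1 : qInt q (x + (lam (ℓ + 1 - (0 + 1) + 1) : ℤ) - ((0 + 1 : ℕ) : ℤ) + 1)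
                  = qInt q x := by
                have he : ℓ + 1 - (0 + 1) + 1 = ℓ + 1 := by omega
                rw [he, h0]
                congr 1
                omega
              rw [hf1]
              have hmain : ∀ t ∈ Finset.range ℓ,
                  qInt q (x + (lam (ℓ + 1 - (t + 1 + 1) + 1) : ℤ) - ((t + 1 + 1 : ℕ) : ℤ) + 1) =
                  qInt q ((x - 1) + (lam (ℓ - (t + 1) + 1) : ℤ) - ((t + 1 : ℕ) : ℤ) + 1) := by
                intro t ht
                rw [Finset.mem_range] at ht
                have he : ℓ + 1 - (t + 1 + 1) + 1 = ℓ - (t + 1) + 1 := by omega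
                rw [he]
                congr 1
                omega
              rw [Finset.prod_congr rfl hmain]
              ring
      · -- delete the first column
        have hpos : ∀ i, 1 ≤ i → i ≤ ℓ + 1 → 1 ≤ lam i := by
          intro i h1 h2
          have := mono i (ℓ + 1) h1 h2 (le_refl _)
          omega
        have hmono' : ∀ i j, 1 ≤ i → i ≤ j → j ≤ ℓ + 1 → dec lam j ≤ dec lam i :=
          fun i j h1 h2 h3 => Nat.sub_le_sub_right (mono i j h1 h2 h3) 1
        have hmeas : (ℓ + 1) + pSize (dec lam) (ℓ + 1) ≤ n := by
          have hsum : pSize (dec lam) (ℓ + 1) + (ℓ + 1) = pSize lam (ℓ + 1) := by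
            rw [pSize, pSize]
            have hterm : ∀ i ∈ Finset.Icc 1 (ℓ + 1), lam i = dec lam i + 1 := by
              intro i hi
              rw [Finset.mem_Icc] at hi
              have := hpos i hi.1 hi.2
              simp only [dec]
              omega
            rw [Finset.sum_congr rfl hterm, Finset.sum_add_distrib, Finset.sum_const,
              Nat.card_Icc, smul_eq_mul]
            omega
          omega
        have ihv := ih (ℓ + 1) (dec lam) hmeas hmono' (x + 1)
        set L := ℓ + 1 with hL
        have key : ∑ k ∈ Finset.range (L + 1), qRook q lam L k * qFall q x (L - k) =
            ∑ k ∈ Finset.range (L + 1), qRook q (dec lam) L k * qFall q (x + 1) (L - k) := by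
          rw [Finset.sum_range_succ' (fun k => qRook q lam L k * qFall q x (L - k)) L]
          have hterm : ∀ k ∈ Finset.range L,
              qRook q lam L (k + 1) * qFall q x (L - (k + 1)) =
              (q ^ (L - (k + 1)) * qRook q (dec lam) L (k + 1) * qFall q x (L - (k + 1))) +
              (qInt q ((L - k : ℕ) : ℤ) * qRook q (dec lam) L k * qFall q x (L - (k + 1))) := by
            intro k _
            rw [qRook_recS q hq1 hpos]
            ring
          rw [Finset.sum_congr rfl hterm, Finset.sum_add_distrib]
          have h00 : qRook q lam L 0 * qFall q x (L - 0) =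
              q ^ (L - 0) * qRook q (dec lam) L 0 * qFall q x (L - 0) := by
            rw [qRook_rec0 q hpos, Nat.sub_zero]
          rw [h00]
          rw [add_right_comm]
          rw [← Finset.sum_range_succ'
            (fun k => q ^ (L - k) * qRook q (dec lam) L k * qFall q x (L - k)) L]
          rw [Finset.sum_range_succ
            (fun k => q ^ (L - k) * qRook q (dec lam) L k * qFall q x (L - k)) L]
          rw [Finset.sum_range_succ
            (fun k => qRook q (dec lam) L k * qFall q (x + 1) (L - k)) L]
          have hcomb : ∀ k ∈ Finset.range L,
              q ^ (L - k) * qRook q (dec lam) L k * qFall q x (L - k) +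
              qInt q ((L - k : ℕ) : ℤ) * qRook q (dec lam) L k * qFall q x (L - (k + 1)) =
              qRook q (dec lam) L k * qFall q (x + 1) (L - k) := by
            intro k hk
            rw [Finset.mem_range] at hk
            have hb : L - k = (L - (k + 1)) + 1 := by omega
            rw [hb]
            have hcb := qFall_combine q hq0 hq1 (L - (k + 1)) x
            linear_combination qRook q (dec lam) L k * hcb
          rw [← Finset.sum_congr rfl hcomb, Finset.sum_add_distrib]
          have hlast : q ^ (L - L) * qRook q (dec lam) L L * qFall q x (L - L) =
              qRook q (dec lam) L L * qFall q (x + 1) (L - L) := by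
            simp [Nat.sub_self, qFall]
          rw [hlast]
          ring
        rw [key, ihv]
        refine Finset.prod_congr rfl (fun i hi => ?_)
        rw [Finset.mem_Icc] at hi
        have hj1 : 1 ≤ L - i + 1 := by omega
        have hj2 : L - i + 1 ≤ L := by omega
        have hlj := hpos (L - i + 1) hj1 hj2
        have hcast : ((dec lam (L - i + 1) : ℕ) : ℤ) = (lam (L - i + 1) : ℤ) - 1 := by
          simp only [dec]
          omega
        rw [hcast]
        congr 1
        ring


/-- Garsia–Remmel generating function identity:
`∑_{k=0}^{ℓ} R_k(λ) [x]_{ℓ-k} = ∏_{i=1}^{ℓ} [x + λ_{ℓ-i+1} - i + 1]`. -/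
theorem stmt0 (q : K) (hq0 : q ≠ 0) (hq1 : ∀ j : ℕ, 0 < j → q ^ j ≠ 1)
    (lam : ℕ → ℕ) (ℓ : ℕ) (hpart : IsPartition lam ℓ) (x : ℤ) :
    ∑ k ∈ Finset.range (ℓ + 1), qRook q lam ℓ k * qFall q x (ℓ - k) =
      ∏ i ∈ Finset.Icc 1 ℓ, qInt q (x + (lam (ℓ - i + 1) : ℤ) - (i : ℤ) + 1) := by
  have hq1' : q ≠ 1 := by
    have := hq1 1 one_pos
    rwa [pow_one] at this
  exact GS q hq0 hq1' (ℓ + pSize lam ℓ) ℓ lam (le_refl _)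
    (fun i j h1 h2 _ => hpart.1 i j h1 h2) x
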